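/- Let A be a unital Banach algebra over ℂ, let L_1, …, L_n ∈ A, let p_1, …, p_n ∈ (0,1] and let s > 0. Assume that for every u ≥ 0 and every j, ‖exp(u • ((1/p_j) • L_j))‖ ≤ 1. Then for every θ ∈ [0,1], the fourth derivative at θ of the function θ ↦ Σ_{b : Fin n → Bool} w(b) • ∏_{j=1}^{n} exp(s·θ • L̂_j(b)) has norm at most s⁴ ( Σ_j ‖L_j‖ / p_j )⁴. -/

import Mathlib

open NormedSpace

/-- The weight of a sparsification pattern `b`: `w(b) = ∏_j (if b j then p_j else 1 − p_j)`. -/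
noncomputable def sparWeight {n : ℕ} (p : Fin n → ℝ) (b : Fin n → Bool) : ℝ :=
  ∏ j : Fin n, (if b j then p j else 1 - p j)

/-- The sparsified term: `L̂_j(b) = (1/p_j) • L_j` if `b j` and `0` otherwise. -/
noncomputable def sparTerm {A : Type*} [NormedRing A] [NormedAlgebra ℂ A] {n : ℕ}
    (L : Fin n → A) (p : Fin n → ℝ) (b : Fin n → Bool) (j : Fin n) : A :=
  if b j then (1 / p j) • L j else 0

section Aux

variable {A : Type*} [NormedRing A] [NormedAlgebra ℂ A] [CompleteSpace A] [NormOneClass A]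

private lemma contDiff_eFun (n : WithTop ℕ∞) (N : A) :
    ContDiff ℝ n (fun θ : ℝ => exp (θ • N)) := by
  have h1 : ContDiff ℝ n (fun θ : ℝ => θ • N) := contDiff_id.smul contDiff_const
  have h2 : ContDiff ℝ n (exp : A → A) :=
    contDiff_iff_contDiffAt.2 fun x => (exp_analytic (𝕂 := ℝ) x).contDiffAt
  exact h2.comp h1

private lemma iteratedDeriv_eFun (N : A) (m : ℕ) :
    iteratedDeriv m (fun θ : ℝ => exp (θ • N)) = fun θ => exp (θ • N) * N ^ m := by
  induction m with
  | zero => simp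
  | succ m ih =>
    rw [iteratedDeriv_succ, ih]
    funext θ
    have h : HasDerivAt (fun θ : ℝ => exp (θ • N) * N ^ m) (exp (θ • N) * N * N ^ m) θ :=
      (hasDerivAt_exp_smul_const N θ).mul_const _
    rw [h.deriv, mul_assoc, ← pow_succ']

private lemma norm_iteratedFDeriv_eFun_le (N : A) (θ : ℝ) (h1 : ‖exp (θ • N)‖ ≤ 1) (m : ℕ) :
    ‖iteratedFDeriv ℝ m (fun θ : ℝ => exp (θ • N)) θ‖ ≤ ‖N‖ ^ m := by
  rw [norm_iteratedFDeriv_eq_norm_iteratedDeriv, iteratedDeriv_eFun]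
  calc ‖exp (θ • N) * N ^ m‖ ≤ ‖exp (θ • N)‖ * ‖N ^ m‖ := norm_mul_le _ _
    _ ≤ 1 * ‖N‖ ^ m := by
        exact mul_le_mul h1 (norm_pow_le _ _) (norm_nonneg _) zero_le_one
    _ = ‖N‖ ^ m := one_mul _

private lemma contDiff_listProd (n : WithTop ℕ∞) (l : List A) :
    ContDiff ℝ n (fun θ : ℝ => (l.map fun N => exp (θ • N)).prod) := by
  induction l with
  | nil => simpa using contDiff_const (c := (1 : A))
  | cons N l ih =>
    simpa using (contDiff_eFun n N).mul ih

private lemma norm_iteratedFDeriv_listProd_le (l : List A) (k : ℕ) (θ : ℝ)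
    (h : ∀ N ∈ l, ‖exp (θ • N)‖ ≤ 1) :
    ‖iteratedFDeriv ℝ k (fun θ : ℝ => (l.map fun N => exp (θ • N)).prod) θ‖
      ≤ (l.map norm).sum ^ k := by
  induction l generalizing k with
  | nil =>
    cases k with
    | zero => simp
    | succ k => simp [iteratedFDeriv_const_of_ne (n := k + 1) (by simp)]
  | cons N l ih =>
    have hS : (0 : ℝ) ≤ (l.map norm).sum :=
      List.sum_nonneg (by simp +contextual [List.mem_map])
    have step := norm_iteratedFDeriv_mul_le (𝕜 := ℝ) (n := k)
      (contDiff_eFun (k : WithTop ℕ∞) N)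
      (contDiff_listProd (k : WithTop ℕ∞) l) θ le_rfl
    simp only [List.map_cons, List.prod_cons] at step ⊢
    refine step.trans ?_
    have hterm : ∀ i ∈ Finset.range (k + 1),
        (k.choose i : ℝ) * ‖iteratedFDeriv ℝ i (fun θ : ℝ => exp (θ • N)) θ‖ *
          ‖iteratedFDeriv ℝ (k - i) (fun θ : ℝ => (l.map fun N => exp (θ • N)).prod) θ‖
        ≤ (k.choose i : ℝ) * ‖N‖ ^ i * (l.map norm).sum ^ (k - i) := by
      intro i _
      have h1 := norm_iteratedFDeriv_eFun_le N θ (h N (by simp)) i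
      have h2 := ih (k - i) (fun M hM => h M (by simp [hM]))
      gcongr
    refine (Finset.sum_le_sum hterm).trans ?_
    rw [List.sum_cons, add_pow]
    apply le_of_eq
    refine Finset.sum_congr rfl fun i _ => by ring

end Aux

set_option maxHeartbeats 1000000 in
/-- The bound on the fourth derivative of the expected stochastic Trotter product
(Appendix A, equations 46–59): for `θ ∈ [0,1]`,
`‖d⁴/dθ⁴ E[∏_j exp(s·θ • L̂_j)]‖ ≤ s⁴ (Σ_j ‖L_j‖/p_j)⁴`. -/
theorem stmt_18 {A : Type*} [NormedRing A] [NormedAlgebra ℂ A]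
    [CompleteSpace A] [NormOneClass A] (n : ℕ)
    (L : Fin n → A) (p : Fin n → ℝ) (hp : ∀ j, p j ∈ Set.Ioc (0 : ℝ) 1)
    (s : ℝ) (hs : 0 < s)
    (hcon : ∀ u : ℝ, 0 ≤ u → ∀ j, ‖exp (u • ((1 / p j) • L j))‖ ≤ 1) :
    ∀ θ ∈ Set.Icc (0 : ℝ) 1,
      ‖iteratedDeriv 4
          (fun θ : ℝ => ∑ b : Fin n → Bool, sparWeight p b •
            (List.ofFn fun j => exp ((s * θ) • sparTerm L p b j)).prod) θ‖
        ≤ s ^ 4 * (∑ j : Fin n, ‖L j‖ / p j) ^ 4 := by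
  intro θ hθ
  -- rewrite the function in terms of `exp (θ • N)` with `N = s • sparTerm`
  have hfun : (fun θ : ℝ => ∑ b : Fin n → Bool, sparWeight p b •
        (List.ofFn fun j => exp ((s * θ) • sparTerm L p b j)).prod)
      = fun θ : ℝ => ∑ b : Fin n → Bool, sparWeight p b •
        (((List.ofFn fun j => s • sparTerm L p b j).map fun N => exp (θ • N)).prod) := by
    funext θ
    refine Finset.sum_congr rfl fun b _ => ?_
    congr 1
    rw [List.map_ofFn]
    refine congrArg List.prod (congrArg List.ofFn ?_)
    funext j
    show exp ((s * θ) • sparTerm L p b j) = exp (θ • s • sparTerm L p b j)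
    rw [mul_comm, mul_smul]
  rw [hfun]
  set T : ℝ := ∑ j : Fin n, ‖L j‖ / p j with hT
  have hTnn : 0 ≤ T := Finset.sum_nonneg fun j _ =>
    div_nonneg (norm_nonneg _) (hp j).1.le
  -- each pattern's product function and its bound
  have hg : ∀ b : Fin n → Bool, ContDiff ℝ ((4 : ℕ) : WithTop ℕ∞)
      (fun θ : ℝ => sparWeight p b •
        (((List.ofFn fun j => s • sparTerm L p b j).map fun N => exp (θ • N)).prod)) :=
    fun b => (contDiff_listProd _ _).const_smul _
  rw [← norm_iteratedFDeriv_eq_norm_iteratedDeriv (𝕜 := ℝ)]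
  rw [show (fun θ : ℝ => ∑ b : Fin n → Bool, sparWeight p b •
        (((List.ofFn fun j => s • sparTerm L p b j).map fun N => exp (θ • N)).prod))
      = (∑ b : Fin n → Bool, (fun θ : ℝ => sparWeight p b •
        (((List.ofFn fun j => s • sparTerm L p b j).map fun N => exp (θ • N)).prod)) ·) from rfl]
  rw [iteratedFDeriv_sum fun b _ => hg b]
  -- weights are nonnegative and sum to one
  have hwnn : ∀ b : Fin n → Bool, 0 ≤ sparWeight p b := fun b =>
    Finset.prod_nonneg fun j _ => by
      by_cases hb : b j <;> simp [hb, (hp j).1.le, (hp j).2]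
  have hwsum : ∑ b : Fin n → Bool, sparWeight p b = 1 := by
    unfold sparWeight
    calc ∑ b : Fin n → Bool, ∏ j, (if b j then p j else 1 - p j)
        = ∑ b ∈ Fintype.piFinset (fun _ : Fin n => (Finset.univ : Finset Bool)),
            ∏ j, (if b j then p j else 1 - p j) := by rw [Fintype.piFinset_univ]
      _ = ∏ j : Fin n, ∑ c ∈ (Finset.univ : Finset Bool), (if c then p j else 1 - p j) :=
          Finset.sum_prod_piFinset (ι := Fin n) (Finset.univ : Finset Bool)
            (fun j c => if c then p j else 1 - p j)
      _ = 1 := Finset.prod_eq_one fun j _ => by simp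
  -- pointwise bound for each pattern
  have hbnd : ∀ b : Fin n → Bool,
      ‖iteratedFDeriv ℝ 4 (fun θ : ℝ =>
        (((List.ofFn fun j => s • sparTerm L p b j).map fun N => exp (θ • N)).prod)) θ‖
        ≤ (s * T) ^ 4 := by
    intro b
    have hmem : ∀ N ∈ (List.ofFn fun j => s • sparTerm L p b j), ‖exp (θ • N)‖ ≤ 1 := by
      intro N hN
      rw [List.mem_ofFn] at hN
      obtain ⟨j, rfl⟩ := hN
      by_cases hb : b j
      · have : θ • s • sparTerm L p b j = (θ * s) • ((1 / p j) • L j) := by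
          rw [smul_smul, sparTerm, if_pos hb]
        rw [this]
        exact hcon (θ * s) (mul_nonneg hθ.1 hs.le) j
      · simp [sparTerm, if_neg hb]
    have key := norm_iteratedFDeriv_listProd_le (List.ofFn fun j => s • sparTerm L p b j) 4 θ hmem
    refine key.trans ?_
    have hsum : ((List.ofFn fun j => s • sparTerm L p b j).map norm).sum ≤ s * T := by
      rw [List.map_ofFn, List.sum_ofFn, hT, Finset.mul_sum]
      refine Finset.sum_le_sum fun j _ => ?_
      simp only [Function.comp_apply]
      have hpj := (hp j).1
      by_cases hb : b j
      · simp only [sparTerm, if_pos hb]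
        rw [norm_smul, norm_smul, Real.norm_eq_abs, Real.norm_eq_abs,
          abs_of_pos hs, abs_of_pos (one_div_pos.mpr hpj)]
        exact le_of_eq (by rw [div_eq_mul_inv]; ring)
      · simp only [sparTerm, if_neg hb, smul_zero, norm_zero]
        have hLj := norm_nonneg (L j)
        positivity
    have hnn : (0:ℝ) ≤ ((List.ofFn fun j => s • sparTerm L p b j).map norm).sum :=
      List.sum_nonneg (by simp +contextual [List.mem_map])
    exact pow_le_pow_left₀ hnn hsum 4
  calc ‖(∑ b : Fin n → Bool, iteratedFDeriv ℝ 4 (fun θ : ℝ => sparWeight p b •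
          (((List.ofFn fun j => s • sparTerm L p b j).map fun N => exp (θ • N)).prod)) ) θ‖
      ≤ ∑ b : Fin n → Bool, ‖iteratedFDeriv ℝ 4 (fun θ : ℝ => sparWeight p b •
          (((List.ofFn fun j => s • sparTerm L p b j).map fun N => exp (θ • N)).prod)) θ‖ := by
        rw [Finset.sum_apply]
        exact norm_sum_le _ _
    _ ≤ ∑ b : Fin n → Bool, sparWeight p b * (s * T) ^ 4 := by
        refine Finset.sum_le_sum fun b _ => ?_
        rw [iteratedFDeriv_const_smul_apply' (contDiff_listProd _ _).contDiffAt]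
        refine le_trans (ContinuousMultilinearMap.opNorm_smul_le _ _) ?_
        rw [Real.norm_eq_abs, abs_of_nonneg (hwnn b)]
        exact mul_le_mul_of_nonneg_left (hbnd b) (hwnn b)
    _ = (s * T) ^ 4 := by rw [← Finset.sum_mul, hwsum, one_mul]
    _ = s ^ 4 * T ^ 4 := by ring
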